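/- Let ℓ be a prime number and let k ⊆ k' be finite fields such that ℓ divides #k − 1 and the degree d = [k' : k] is not divisible by ℓ. Then the norm map N_{k'/k} : k'ˣ → kˣ sends ℓ-th powers to ℓ-th powers, and the induced group homomorphism k'ˣ/(k'ˣ)^ℓ → kˣ/(kˣ)^ℓ is an isomorphism; in particular, if α ∈ k'ˣ satisfies N_{k'/k}(α) ∈ (kˣ)^ℓ, then α ∈ (k'ˣ)^ℓ. -/

import Mathlib

private lemma cyclic_pow_mem_iff {G : Type*} [CommGroup G] [Fintype G] [IsCyclic G]
    {ℓ : ℕ} (hℓ : ℓ.Prime) (hdvd : ℓ ∣ Fintype.card G) (a : G) :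
    a ∈ (powMonoidHom ℓ : G →* G).range ↔ a ^ (Fintype.card G / ℓ) = 1 := by
  constructor
  · rintro ⟨b, rfl⟩
    rw [powMonoidHom_apply, ← pow_mul, Nat.mul_div_cancel' hdvd, pow_card_eq_one]
  · intro h
    obtain ⟨g, hg⟩ := IsCyclic.exists_monoid_generator (α := G)
    obtain ⟨t, rfl⟩ := hg a
    rw [← pow_mul] at h
    have horder : orderOf g = Fintype.card G := by
      rw [orderOf_eq_card_of_forall_mem_zpowers fun x =>
        (mem_powers_iff_mem_zpowers).mp (hg x), Nat.card_eq_fintype_card]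
    have hdvd2 : Fintype.card G ∣ t * (Fintype.card G / ℓ) := by
      rw [← horder]; exact orderOf_dvd_of_pow_eq_one (horder ▸ h)
    have hcardpos : 0 < Fintype.card G := Fintype.card_pos
    have hℓpos : 0 < Fintype.card G / ℓ :=
      Nat.div_pos (Nat.le_of_dvd hcardpos hdvd) hℓ.pos
    have hℓt : ℓ ∣ t := by
      have h2 : ℓ * (Fintype.card G / ℓ) ∣ t * (Fintype.card G / ℓ) := by
        rwa [Nat.mul_div_cancel' hdvd]
      exact (Nat.mul_dvd_mul_iff_right hℓpos).mp h2
    obtain ⟨s, rfl⟩ := hℓt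
    exact ⟨g ^ s, by rw [powMonoidHom_apply, ← pow_mul, mul_comm ℓ s]⟩

theorem stmt_2 (ℓ : ℕ) (hℓ : ℓ.Prime)
    (k k' : Type*) [Field k] [Field k'] [Fintype k] [Fintype k'] [Algebra k k']
    (hcard : ℓ ∣ Fintype.card k - 1) (hdeg : ¬ ℓ ∣ Module.finrank k k') :
    (∀ x : k'ˣ, x ∈ (powMonoidHom ℓ : k'ˣ →* k'ˣ).range →
        Units.map (Algebra.norm k : k' →* k) x ∈ (powMonoidHom ℓ : kˣ →* kˣ).range) ∧
    (∃ h : (powMonoidHom ℓ : k'ˣ →* k'ˣ).range ≤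
        Subgroup.comap (Units.map (Algebra.norm k : k' →* k))
          (powMonoidHom ℓ : kˣ →* kˣ).range,
      Function.Bijective
        (QuotientGroup.map (powMonoidHom ℓ : k'ˣ →* k'ˣ).range
          (powMonoidHom ℓ : kˣ →* kˣ).range (Units.map (Algebra.norm k : k' →* k)) h)) ∧
    (∀ α : k'ˣ, Units.map (Algebra.norm k : k' →* k) α ∈ (powMonoidHom ℓ : kˣ →* kˣ).range →
        α ∈ (powMonoidHom ℓ : k'ˣ →* k'ˣ).range) := by
  classical
  have hfd : FiniteDimensional k k' := Module.Finite.of_finite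
  set q := Fintype.card k with hqdef
  set d := Module.finrank k k' with hddef
  have hd0 : d ≠ 0 := fun h => hdeg (h ▸ dvd_zero ℓ)
  have hq2 : 2 ≤ q := Fintype.one_lt_card
  have hQ : Fintype.card k' = q ^ d := Module.card_eq_pow_finrank
  -- characteristic
  set p := ringChar k with hpdef
  haveI hcharp : CharP k p := ringChar.charP k
  obtain ⟨n, hp, hpn⟩ := FiniteField.card k p
  haveI : Fact p.Prime := ⟨hp⟩
  haveI : CharP k' p := charP_of_injective_algebraMap (algebraMap k k').injective p
  -- the relative Frobenius
  let ψ : k' →ₐ[k] k' :=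
    { toRingHom := iterateFrobenius k' p n
      commutes' := fun c => by
        show iterateFrobenius k' p n ((algebraMap k k') c) = (algebraMap k k') c
        rw [iterateFrobenius_def, ← map_pow, ← hpn, FiniteField.pow_card] }
  have hψ : ∀ x : k', ψ x = x ^ q := fun x => by
    show iterateFrobenius k' p n x = x ^ q
    rw [iterateFrobenius_def, hqdef, hpn]
  let φ : k' ≃ₐ[k] k' := AlgEquiv.ofBijective ψ
    ((Finite.injective_iff_bijective).mp (RingHom.injective (ψ : k' →+* k')))
  have hφ : ∀ x : k', φ x = x ^ q := hψ
  have hφpow : ∀ (i : ℕ) (x : k'), (φ ^ i) x = x ^ q ^ i := by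
    intro i
    induction i with
    | zero => intro x; simp
    | succ i ih =>
      intro x
      rw [pow_succ', AlgEquiv.mul_apply, hφ, ih, ← pow_mul, ← pow_succ]
  clear_value q d
  -- generator of k'ˣ
  obtain ⟨g, hg⟩ := IsCyclic.exists_generator (α := k'ˣ)
  have horderg : orderOf g = q ^ d - 1 := by
    rw [orderOf_eq_card_of_forall_mem_zpowers hg, Nat.card_eq_fintype_card,
      Fintype.card_units, hQ]
  have hQ2 : 2 ≤ q ^ d := le_trans hq2 (Nat.le_self_pow hd0 q)
  -- order of φ is d
  have hφd : φ ^ d = 1 := by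
    apply AlgEquiv.ext
    intro x
    rw [hφpow, ← hQ, FiniteField.pow_card, AlgEquiv.one_apply]
  have horderφ : orderOf φ = d := by
    rw [orderOf_eq_iff (Nat.pos_of_ne_zero hd0)]
    refine ⟨hφd, fun i hi hi0 h1 => ?_⟩
    have hgi : (g : k') ^ q ^ i = (g : k') := by
      have := congrArg (fun σ : k' ≃ₐ[k] k' => σ (g : k')) h1
      simpa [hφpow] using this
    have hgu : g ^ q ^ i = g ^ 1 := by
      ext; push_cast; simpa using hgi
    have hmod : q ^ i ≡ 1 [MOD q ^ d - 1] := by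
      rw [pow_eq_pow_iff_modEq, horderg] at hgu
      exact hgu
    have hd2 : 2 ≤ d := by omega
    have hqi1 : q ^ i < q ^ d - 1 := by
      have h1 : q ^ i ≤ q ^ (d - 1) := Nat.pow_le_pow_right (by omega) (by omega)
      have h2 : q ^ (d - 1) * 2 ≤ q ^ (d - 1) * q := Nat.mul_le_mul_left _ hq2
      have h3 : q ^ (d - 1) * q = q ^ d := by
        rw [← pow_succ]; congr 1; omega
      have h5 : 2 ≤ q ^ (d - 1) := le_trans hq2 (Nat.le_self_pow (by omega) q)
      omega
    have h11 : 1 < q ^ d - 1 := by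
      have h6 : q ^ i < q ^ d := Nat.pow_lt_pow_right (by omega) hi
      have : 2 ≤ q ^ i := le_trans hq2 (Nat.le_self_pow (by omega) q)
      omega
    have := hmod.eq_of_lt_of_lt hqi1 (by omega)
    have : 2 ≤ q ^ i := le_trans hq2 (Nat.le_self_pow (by omega) q)
    omega
  -- the automorphism group is exactly the powers of φ
  haveI : IsGalois k k' := inferInstance
  have hcardG : Fintype.card (k' ≃ₐ[k] k') = d := by
    rw [hddef, ← Nat.card_eq_fintype_card]; exact IsGalois.card_aut_eq_finrank k k'
  have einj : Function.Injective (fun i : Fin d => φ ^ (i : ℕ)) := by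
    intro i j hij
    have h2 : (i : ℕ) ≡ (j : ℕ) [MOD orderOf φ] := pow_eq_pow_iff_modEq.mp hij
    rw [horderφ] at h2
    exact Fin.ext (h2.eq_of_lt_of_lt i.isLt j.isLt)
  have ebij : Function.Bijective (fun i : Fin d => φ ^ (i : ℕ)) :=
    (Fintype.bijective_iff_injective_and_card _).mpr ⟨einj, by simp [hcardG]⟩
  -- the norm is x ^ m
  set m := ∑ i ∈ Finset.range d, q ^ i with hm
  have hnorm : ∀ x : k', algebraMap k k' (Algebra.norm k x) = x ^ m := by
    intro x
    rw [Algebra.norm_eq_prod_automorphisms,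
      ← (Equiv.ofBijective _ ebij).prod_comp fun σ : k' ≃ₐ[k] k' => σ x]
    simp only [Equiv.ofBijective_apply, hφpow]
    rw [Finset.prod_pow_eq_pow_sum, hm, ← Fin.sum_univ_eq_sum_range]
  -- arithmetic facts
  have hmpos : 0 < m := by
    rw [hm]
    exact Finset.sum_pos (fun i _ => pow_pos (by omega) i) (Finset.nonempty_range_iff.mpr hd0)
  have hgeom : (q - 1) * m = q ^ d - 1 := by
    have h1 : (1:ℕ) ≤ q := by omega
    have h2 : (1:ℕ) ≤ q ^ d := Nat.one_le_pow _ _ (by omega)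
    have h := geom_sum_mul (q : ℤ) d
    zify [h1, h2]
    rw [hm]
    push_cast
    linear_combination h
  have hQ1dvd : ℓ ∣ q ^ d - 1 := hgeom ▸ hcard.mul_right m
  have hmdvd : m ∣ q ^ d - 1 := hgeom ▸ Dvd.intro_left _ rfl
  have hms : m * ((q - 1) / ℓ) = (q ^ d - 1) / ℓ := by
    rw [← Nat.mul_div_assoc m hcard, mul_comm m (q - 1), hgeom]
  -- unit groups
  have hcardk : Fintype.card kˣ = q - 1 := by rw [Fintype.card_units, ← hqdef]
  have hcardk' : Fintype.card k'ˣ = q ^ d - 1 := by rw [Fintype.card_units, hQ]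
  set N := Units.map (Algebra.norm k : k' →* k) with hNdef
  set jm := Units.map (algebraMap k k' : k →* k') with hjdef
  have hjinj : Function.Injective jm := Units.map_injective (algebraMap k k').injective
  have hjN : ∀ α : k'ˣ, jm (N α) = α ^ m := by
    intro α
    ext
    simp only [hjdef, hNdef, Units.coe_map, MonoidHom.coe_coe, Units.val_pow_eq_pow_val]
    exact hnorm (α : k')
  have hcrit' : ∀ α : k'ˣ,
      (α ∈ (powMonoidHom ℓ : k'ˣ →* k'ˣ).range ↔ α ^ ((q ^ d - 1) / ℓ) = 1) := by
    intro α
    have := cyclic_pow_mem_iff (G := k'ˣ) hℓ (by rw [hcardk']; exact hQ1dvd) α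
    rwa [hcardk'] at this
  have hcritk : ∀ β : kˣ,
      (β ∈ (powMonoidHom ℓ : kˣ →* kˣ).range ↔ β ^ ((q - 1) / ℓ) = 1) := by
    intro β
    have := cyclic_pow_mem_iff (G := kˣ) hℓ (by rw [hcardk]; exact hcard) β
    rwa [hcardk] at this
  have hC2 : ∀ α : k'ˣ, ((N α) ^ ((q - 1) / ℓ) = 1 ↔ α ^ ((q ^ d - 1) / ℓ) = 1) := by
    intro α
    rw [← hjinj.eq_iff, map_pow, map_one, hjN, ← pow_mul, hms]
  have hkey : ∀ α : k'ˣ, (N α ∈ (powMonoidHom ℓ : kˣ →* kˣ).range ↔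
      α ∈ (powMonoidHom ℓ : k'ˣ →* k'ˣ).range) := by
    intro α
    rw [hcritk (N α), hC2 α, hcrit' α]
  -- surjectivity of the norm on units
  have hordNg : orderOf (N g) = q - 1 := by
    rw [← orderOf_injective jm hjinj, hjN, orderOf_pow, horderg,
      Nat.gcd_eq_right hmdvd, ← hgeom, Nat.mul_div_cancel _ hmpos]
  have hNsurj : Function.Surjective N := by
    intro β
    have htop : Subgroup.zpowers (N g) = ⊤ := by
      apply Subgroup.eq_top_of_card_eq
      rw [Nat.card_zpowers, hordNg, Nat.card_eq_fintype_card, hcardk]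
    have hβ : β ∈ Subgroup.zpowers (N g) := htop ▸ Subgroup.mem_top β
    obtain ⟨t, ht⟩ := Subgroup.mem_zpowers_iff.mp hβ
    exact ⟨g ^ t, by rw [map_zpow]; exact ht⟩
  -- assemble
  have part1 : ∀ x : k'ˣ, x ∈ (powMonoidHom ℓ : k'ˣ →* k'ˣ).range →
      N x ∈ (powMonoidHom ℓ : kˣ →* kˣ).range := fun x hx => (hkey x).mpr hx
  refine ⟨part1, ⟨show (powMonoidHom ℓ : k'ˣ →* k'ˣ).range ≤ Subgroup.comap N (powMonoidHom ℓ : kˣ →* kˣ).range from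
    fun ⦃x⦄ hx => part1 x hx, ?_, ?_⟩, fun α h => (hkey α).mp h⟩
  · rw [injective_iff_map_eq_one]
    intro x hx
    obtain ⟨α, rfl⟩ := QuotientGroup.mk_surjective x
    rw [QuotientGroup.map_mk, QuotientGroup.eq_one_iff] at hx
    rw [QuotientGroup.eq_one_iff]
    exact (hkey α).mp hx
  · intro y
    obtain ⟨β, rfl⟩ := QuotientGroup.mk_surjective y
    obtain ⟨α, rfl⟩ := hNsurj β
    exact ⟨QuotientGroup.mk α, QuotientGroup.map_mk _ _ _ _ _⟩
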